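/- Define f(n) = n(n−1) if n is even and f(n) = n² + (n−1)/2 if n is odd. If a graph has at least f(n) edges, then it contains a star with n edges or a matching with n edges (i.e., either a vertex of degree at least n or n pairwise disjoint edges). -/

import Mathlib

open SimpleGraph

/-- The number of subgraphs of `G` isomorphic to `H`. -/
noncomputable def copyCount {α β : Type*} (H : SimpleGraph α) (G : SimpleGraph β) : ℕ :=
  Set.ncard {G' : G.Subgraph | Nonempty (H ≃g G'.coe)}

/-- `G` contains a subgraph isomorphic to `F`. -/
def Contains {α β : Type*} (F : SimpleGraph α) (G : SimpleGraph β) : Prop :=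
  ∃ f : F →g G, Function.Injective f

/-- The generalized Turán number `ex(n, H, F)`: the maximum number of subgraphs
isomorphic to `H` in an `F`-free graph on `n` vertices. -/
noncomputable def exGen {α β : Type*} (n : ℕ) (H : SimpleGraph α) (F : SimpleGraph β) : ℕ :=
  sSup {N | ∃ G : SimpleGraph (Fin n), ¬ Contains F G ∧ N = copyCount H G}

/-- The double star `S_{a,b}`: central edge `0-1`, vertices `2,…,a+1` are leaves
attached to `0`, and vertices `a+2,…,a+b+1` are leaves attached to `1`. -/
def doubleStar (a b : ℕ) : SimpleGraph (Fin (a + b + 2)) :=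
  SimpleGraph.fromRel (fun x y =>
    (x.val = 0 ∧ y.val = 1) ∨ (x.val = 0 ∧ 2 ≤ y.val ∧ y.val < a + 2) ∨
      (x.val = 1 ∧ a + 2 ≤ y.val))
set_option linter.unusedSectionVars false
set_option linter.unusedVariables false
set_option maxHeartbeats 1000000

namespace AHSproof
variable {V : Type*} [Fintype V]

def IsMat (G M : SimpleGraph V) : Prop :=
  M ≤ G ∧ ∀ ⦃v w w'⦄, M.Adj v w → M.Adj v w' → w = w'

noncomputable def msize (M : SimpleGraph V) : ℕ := M.edgeSet.ncard

noncomputable def matNum (G : SimpleGraph V) : ℕ :=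
  sSup {k | ∃ M, IsMat G M ∧ k = msize M}

def sat (M : SimpleGraph V) (v : V) : Prop := ∃ w, M.Adj v w

def rest (G : SimpleGraph V) (s : Set V) : SimpleGraph V where
  Adj a b := G.Adj a b ∧ a ∈ s ∧ b ∈ s
  symm := ⟨fun a b => by rintro ⟨h, ha, hb⟩; exact ⟨h.symm, hb, ha⟩⟩
  loopless := ⟨fun a => by rintro ⟨h, -, -⟩; exact G.loopless.irrefl a h⟩

@[simp] lemma rest_adj {G : SimpleGraph V} {s : Set V} {a b : V} :
    (rest G s).Adj a b ↔ G.Adj a b ∧ a ∈ s ∧ b ∈ s := Iff.rfl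

def AdjClosed (G : SimpleGraph V) (s : Set V) : Prop :=
  ∀ ⦃a b⦄, G.Adj a b → (a ∈ s ↔ b ∈ s)

noncomputable def ndeg (G : SimpleGraph V) (v : V) : ℕ := (G.neighborSet v).ncard

def Uniq (K : SimpleGraph V) : Prop := ∀ ⦃v w w'⦄, K.Adj v w → K.Adj v w' → w = w'

lemma edgeSet_mono' {G H : SimpleGraph V} (h : H ≤ G) : H.edgeSet ⊆ G.edgeSet :=
  SimpleGraph.edgeSet_mono h

lemma msize_le_of_le {G H : SimpleGraph V} (h : H ≤ G) : msize H ≤ msize G :=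
  Set.ncard_le_ncard (edgeSet_mono' h) (Set.toFinite _)

lemma isMat_bot (G : SimpleGraph V) : IsMat G ⊥ :=
  ⟨bot_le, by intro v w w' h; simp at h⟩

lemma matSet_nonempty (G : SimpleGraph V) :
    {k | ∃ M, IsMat G M ∧ k = msize M}.Nonempty :=
  ⟨msize (⊥ : SimpleGraph V), ⊥, isMat_bot G, rfl⟩

lemma matSet_bddAbove (G : SimpleGraph V) :
    BddAbove {k | ∃ M, IsMat G M ∧ k = msize M} := by
  refine ⟨msize G, ?_⟩
  rintro k ⟨M, hM, rfl⟩
  exact msize_le_of_le hM.1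

lemma le_matNum {G M : SimpleGraph V} (h : IsMat G M) : msize M ≤ matNum G :=
  le_csSup (matSet_bddAbove G) ⟨M, h, rfl⟩

lemma exists_max_matching (G : SimpleGraph V) :
    ∃ M, IsMat G M ∧ msize M = matNum G := by
  have := Nat.sSup_mem (matSet_nonempty G) (matSet_bddAbove G)
  obtain ⟨M, hM, h⟩ := this
  exact ⟨M, hM, h.symm⟩


lemma rest_le (G : SimpleGraph V) (s : Set V) : rest G s ≤ G := fun _ _ h => h.1


lemma edgeSet_rest_union {G : SimpleGraph V} {s : Set V} (hs : AdjClosed G s) :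
    G.edgeSet = (rest G s).edgeSet ∪ (rest G sᶜ).edgeSet := by
  ext e
  refine Sym2.ind (fun a b => ?_) e
  simp only [Set.mem_union, mem_edgeSet, rest_adj, Set.mem_compl_iff]
  constructor
  · intro h
    by_cases ha : a ∈ s
    · exact Or.inl ⟨h, ha, (hs h).mp ha⟩
    · exact Or.inr ⟨h, ha, fun hb => ha ((hs h).mpr hb)⟩
  · rintro (⟨h, -, -⟩ | ⟨h, -, -⟩) <;> exact h

lemma edgeSet_rest_disj {G : SimpleGraph V} (s : Set V) :
    Disjoint (rest G s).edgeSet (rest G sᶜ).edgeSet := by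
  rw [Set.disjoint_left]
  intro e he he'
  induction e with
  | _ a b =>
    rw [mem_edgeSet] at he he'
    exact he'.2.1 he.2.1

lemma ncard_union_of_disjoint {s t : Set V} (h : Disjoint s t) :
    (s ∪ t).ncard = s.ncard + t.ncard :=
  Set.ncard_union_eq h (Set.toFinite _) (Set.toFinite _)

lemma msize_rest_split {G : SimpleGraph V} {s : Set V} (hs : AdjClosed G s) :
    msize G = msize (rest G s) + msize (rest G sᶜ) := by
  unfold msize
  rw [edgeSet_rest_union hs]
  exact Set.ncard_union_eq (edgeSet_rest_disj s) (Set.toFinite _) (Set.toFinite _)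


lemma ndeg_le_of_le {G H : SimpleGraph V} (h : H ≤ G) (v : V) : ndeg H v ≤ ndeg G v :=
  Set.ncard_le_ncard (fun w hw => h hw) (Set.toFinite _)

/-- handshake -/
lemma sum_ndeg_eq (G : SimpleGraph V) : ∑ v, ndeg G v = 2 * msize G := by
  classical
  have h := SimpleGraph.sum_degrees_eq_twice_card_edges G
  have h1 : ∀ v, ndeg G v = G.degree v := by
    intro v
    rw [ndeg, ← card_neighborSet_eq_degree, Set.ncard_eq_toFinset_card', Set.toFinset_card]
  have h2 : msize G = G.edgeFinset.card := Set.ncard_eq_toFinset_card' _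
  rw [h2]
  rw [← h]
  exact Finset.sum_congr rfl fun v _ => h1 v


section util
variable {G M M₁ M₂ : SimpleGraph V} {s : Set V} {x y : V}

/-- edges of `M₁` inside `s`, edges of `M₂` outside `s`: the sup is a matching -/
lemma isMat_sup (h1 : IsMat G M₁) (h2 : IsMat G M₂)
    (hs1 : ∀ ⦃a b⦄, M₁.Adj a b → a ∈ s) (hs2 : ∀ ⦃a b⦄, M₂.Adj a b → a ∉ s) :
    IsMat G (M₁ ⊔ M₂) := by
  constructor
  · exact sup_le h1.1 h2.1
  · intro v w w' hw hw'
    rcases hw with hw | hw <;> rcases hw' with hw' | hw'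
    · exact h1.2 hw hw'
    · exact absurd (hs1 hw) (hs2 hw')
    · exact absurd (hs1 hw') (hs2 hw)
    · exact h2.2 hw hw'

lemma msize_sup_of_disjoint (h : Disjoint M₁.edgeSet M₂.edgeSet) :
    msize (M₁ ⊔ M₂) = msize M₁ + msize M₂ := by
  unfold msize
  rw [edgeSet_sup]
  exact Set.ncard_union_eq h (Set.toFinite _) (Set.toFinite _)

/-- adding an edge between two unsaturated vertices -/
lemma isMat_insert (hM : IsMat G M) (hadj : G.Adj x y)
    (hx : ¬ sat M x) (hy : ¬ sat M y) :
    IsMat G (M ⊔ fromEdgeSet {s(x,y)}) ∧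
      msize (M ⊔ fromEdgeSet {s(x,y)}) = msize M + 1 := by
  have hne : x ≠ y := hadj.ne
  have hE : ∀ a b : V, (fromEdgeSet {s(x,y)} : SimpleGraph V).Adj a b ↔
      (a = x ∧ b = y) ∨ (a = y ∧ b = x) := by
    intro a b
    rw [fromEdgeSet_adj]
    constructor
    · rintro ⟨he, hab⟩
      rw [Set.mem_singleton_iff, Sym2.eq_iff] at he
      tauto
    · rintro (⟨rfl, rfl⟩ | ⟨rfl, rfl⟩)
      · exact ⟨rfl, hne⟩
      · simp [Sym2.eq_swap, hne.symm]
  constructor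
  · constructor
    · refine sup_le hM.1 ?_
      intro a b hab
      rw [hE] at hab
      rcases hab with ⟨rfl, rfl⟩ | ⟨rfl, rfl⟩
      · exact hadj
      · exact hadj.symm
    · intro v w w' hw hw'
      rcases hw with hw | hw <;> rcases hw' with hw' | hw'
      · exact hM.2 hw hw'
      · rw [hE] at hw'
        rcases hw' with ⟨rfl, rfl⟩ | ⟨rfl, rfl⟩
        · exact absurd ⟨_, hw⟩ hx
        · exact absurd ⟨_, hw⟩ hy
      · rw [hE] at hw
        rcases hw with ⟨rfl, rfl⟩ | ⟨rfl, rfl⟩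
        · exact absurd ⟨_, hw'⟩ hx
        · exact absurd ⟨_, hw'⟩ hy
      · rw [hE] at hw hw'
        rcases hw with ⟨rfl, h1⟩ | ⟨rfl, h1⟩ <;> rcases hw' with ⟨h2, h3⟩ | ⟨h2, h3⟩ <;>
          simp_all
  · unfold msize
    rw [edgeSet_sup, edgeSet_fromEdgeSet]
    have : {s(x,y)} \ Sym2.diagSet (α := V) = {s(x,y)} := by
      ext e
      simp only [Set.mem_diff, Set.mem_singleton_iff, Sym2.mem_diagSet, and_iff_left_iff_imp]
      rintro rfl
      rw [Sym2.mk_isDiag_iff]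
      exact hne
    rw [this]
    rw [Set.union_singleton, Set.ncard_insert_of_notMem ?_ (Set.toFinite _)]
    intro hmem
    rw [mem_edgeSet] at hmem
    exact hx ⟨_, hmem⟩
end util


section satcount
variable {G M : SimpleGraph V} {s : Set V}

lemma card_sat_eq (hM : IsMat G M) (hs : AdjClosed M s) :
    {v | v ∈ s ∧ sat M v}.ncard = 2 * msize (rest M s) := by
  classical
  rw [← sum_ndeg_eq]
  have hpt : ∀ v : V, ndeg (rest M s) v = if v ∈ s ∧ sat M v then 1 else 0 := by
    intro v
    by_cases h : v ∈ s ∧ sat M v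
    · rw [if_pos h]
      obtain ⟨hv, w, hw⟩ := h
      unfold ndeg
      rw [Set.ncard_eq_one]
      refine ⟨w, ?_⟩
      ext u
      simp only [mem_neighborSet, rest_adj, Set.mem_singleton_iff]
      constructor
      · rintro ⟨hu, -, -⟩
        exact hM.2 hu hw
      · rintro rfl
        exact ⟨hw, hv, (hs hw).mp hv⟩
    · rw [if_neg h]
      unfold ndeg
      rw [Set.ncard_eq_zero (Set.toFinite _)]
      ext u
      simp only [mem_neighborSet, rest_adj, Set.mem_empty_iff_false, iff_false]
      rintro ⟨hu, hv, -⟩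
      exact h ⟨hv, ⟨u, hu⟩⟩
  rw [Finset.sum_congr rfl fun v _ => hpt v, Finset.sum_ite, Finset.sum_const_zero,
    add_zero, Finset.sum_const, smul_eq_mul, mul_one, Set.ncard_eq_toFinset_card']
  congr 1
  ext v
  simp [Set.mem_toFinset]

lemma ncard_split (s : Set V) (P : V → Prop) :
    s.ncard = {v | v ∈ s ∧ P v}.ncard + {v | v ∈ s ∧ ¬ P v}.ncard := by
  classical
  rw [← Set.ncard_union_eq ?_ (Set.toFinite _) (Set.toFinite _)]
  · congr 1
    ext v
    by_cases h : P v <;> simp [h]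
  · rw [Set.disjoint_left]
    rintro v ⟨-, h⟩ ⟨-, h'⟩
    exact h' h

end satcount

open Classical in
/-- partner function of a matching -/
noncomputable def pn (K : SimpleGraph V) (v : V) : Option V :=
  if h : sat K v then some h.choose else none

lemma pn_none_iff {K : SimpleGraph V} {v : V} : pn K v = none ↔ ¬ sat K v := by
  unfold pn
  split <;> simp_all

lemma pn_some_iff {K : SimpleGraph V} (hu : Uniq K) {v w : V} :
    pn K v = some w ↔ K.Adj v w := by
  unfold pn
  split
  · rename_i h
    constructor
    · rintro h'
      rw [Option.some_inj] at h'
      subst h'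
      exact h.choose_spec
    · intro hadj
      rw [Option.some_inj]
      exact hu h.choose_spec hadj
  · rename_i h
    simp only [false_iff, reduceCtorEq]
    exact fun hadj => h ⟨w, hadj⟩

/-- the alternating pattern: at even steps use `N`, at odd steps use `M` -/
def pgr (M N : SimpleGraph V) (k : ℕ) : SimpleGraph V := if Even k then N else M

lemma pgr_uniq {M N : SimpleGraph V} (hMu : Uniq M) (hNu : Uniq N) (k : ℕ) :
    Uniq (pgr M N k) := by
  unfold pgr; split <;> assumption

lemma pgr_eq_of_parity {M N : SimpleGraph V} {k l : ℕ} (h : Even k ↔ Even l) :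
    pgr M N k = pgr M N l := by
  unfold pgr
  by_cases hk : Even k
  · rw [if_pos hk, if_pos (h.mp hk)]
  · rw [if_neg hk, if_neg fun hl => hk (h.mpr hl)]

/-- the alternating orbit sequence starting at `x` -/
noncomputable def osq (M N : SimpleGraph V) (x : V) : ℕ → Option V
  | 0 => some x
  | k+1 => (osq M N x k).bind (pn (pgr M N k))

section orbit
variable {G M N : SimpleGraph V} {x : V}

lemma osq_zero : osq M N x 0 = some x := rfl

lemma osq_succ_eq (k : ℕ) :
    osq M N x (k+1) = (osq M N x k).bind (pn (pgr M N k)) := rfl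

lemma osq_adj {k : ℕ} {a b : V} (h1 : osq M N x k = some a)
    (h2 : osq M N x (k+1) = some b) : (pgr M N k).Adj a b := by
  rw [osq_succ_eq, h1, Option.bind_some] at h2
  unfold pn at h2
  split at h2
  · rename_i h
    rw [Option.some_inj] at h2
    subst h2
    exact h.choose_spec
  · simp at h2

lemma osq_succ_of_adj (hMu : Uniq M) (hNu : Uniq N) {k : ℕ} {a b : V}
    (h1 : osq M N x k = some a) (hadj : (pgr M N k).Adj a b) :
    osq M N x (k+1) = some b := by
  rw [osq_succ_eq, h1, Option.bind_some, pn_some_iff (pgr_uniq hMu hNu k)]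
  exact hadj

lemma osq_none_succ {k : ℕ} (h : osq M N x k = none) : osq M N x (k+1) = none := by
  rw [osq_succ_eq, h]
  rfl

lemma osq_isSome_of_le {i j : ℕ} (hij : i ≤ j) {a : V} (h : osq M N x j = some a) :
    ∃ b, osq M N x i = some b := by
  by_contra hc
  push_neg at hc
  have hnone : osq M N x i = none := by
    cases hh : osq M N x i with
    | none => rfl
    | some b => exact absurd hh (hc b)
  have : ∀ m, osq M N x (i + m) = none := by
    intro m
    induction m with
    | zero => simpa using hnone
    | succ m ih => rw [← Nat.add_assoc]; exact osq_none_succ ih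
  obtain ⟨m, rfl⟩ := Nat.exists_eq_add_of_le hij
  rw [this m] at h
  exact absurd h (by simp)

/-- no vertex repeats along the orbit -/
lemma osq_inj (hMu : Uniq M) (hNu : Uniq N) (hxM : ¬ sat M x) :
    ∀ j i v, i < j → osq M N x i = some v → osq M N x j = some v → False := by
  intro j
  induction j using Nat.strong_induction_on with
  | _ j IH =>
  intro i v hij hi hj
  -- j ≥ 1
  obtain ⟨j', rfl⟩ : ∃ j', j = j' + 1 := ⟨j - 1, by omega⟩
  obtain ⟨pj, hpj⟩ := osq_isSome_of_le (Nat.le_succ j') hj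
  have Ej : (pgr M N j').Adj pj v := osq_adj hpj hj
  rcases Nat.eq_zero_or_pos i with rfl | hipos
  · -- i = 0 : v = x
    rw [osq_zero, Option.some_inj] at hi
    obtain rfl : v = x := hi.symm
    by_cases hpar : Even j'
    · -- entry edge is an N edge; so pj is the N-partner of v
      have hN : N.Adj v pj := by
        have h' := Ej.symm
        unfold pgr at h'
        rwa [if_pos hpar] at h'
      have h1 : osq M N v 1 = some pj := by
        refine osq_succ_of_adj hMu hNu osq_zero ?_
        unfold pgr
        rw [if_pos (by simp)]
        exact hN
      rcases Nat.lt_trichotomy 1 j' with hlt | heq | hgt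
      · exact IH j' (by omega) 1 pj hlt h1 hpj
      · -- j' = 1 contradicts Even j'
        rw [← heq] at hpar
        simp at hpar
      · -- j' = 0 : edge v v
        have hj0 : j' = 0 := by omega
        subst hj0
        rw [osq_zero, Option.some_inj] at hpj
        subst hpj
        exact (pgr M N 0).loopless.irrefl v Ej
    · -- entry edge is an M edge: v is M-saturated, contradiction
      have hMadj : M.Adj pj v := by
        have h' := Ej
        unfold pgr at h'
        rwa [if_neg hpar] at h'
      exact hxM ⟨pj, hMadj.symm⟩
  · -- i ≥ 1
    obtain ⟨i', rfl⟩ : ∃ i', i = i' + 1 := ⟨i - 1, by omega⟩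
    obtain ⟨pi, hpi⟩ := osq_isSome_of_le (Nat.le_succ i') hi
    have Ei : (pgr M N i').Adj pi v := osq_adj hpi hi
    by_cases hpar : Even i' ↔ Even j'
    · -- same parity: unique partner of v
      have : pgr M N i' = pgr M N j' := pgr_eq_of_parity hpar
      rw [this] at Ei
      have : pi = pj := (pgr_uniq hMu hNu j') Ei.symm Ej.symm
      subst this
      exact IH j' (by omega) i' pi (by omega) hpi hpj
    · -- different parity: exit edge from v at step i'+1 is in pgr j'
      have hpar2 : Even (i'+1) ↔ Even j' := by
        simp only [Nat.even_iff] at hpar ⊢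
        omega
      have hpgr : pgr M N (i'+1) = pgr M N j' := pgr_eq_of_parity hpar2
      have hexit : osq M N x (i'+1+1) = some pj := by
        refine osq_succ_of_adj hMu hNu hi ?_
        rw [hpgr]
        exact Ej.symm
      rcases Nat.lt_trichotomy (i'+1+1) j' with hlt | heq | hgt
      · exact IH j' (by omega) (i'+1+1) pj hlt hexit hpj
      · -- j' = i'+2 : same parity as i', contradiction with different parity
        simp only [Nat.even_iff] at hpar
        omega
      · -- i'+2 > j' and i'+1 < j'+1 gives i'+2 = j'+1, i.e. j' = i'+1
        have hji : j' = i' + 1 := by omega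
        subst hji
        rw [hpj, Option.some_inj] at hi
        obtain rfl : v = pj := hi.symm
        exact (pgr M N (i'+1)).loopless.irrefl v Ej
end orbit

section orbit2
variable {G M N : SimpleGraph V} {x : V}

lemma osq_exists_none (hMu : Uniq M) (hNu : Uniq N) (hxM : ¬ sat M x) :
    ∃ k, osq M N x k = none := by
  by_contra h
  push_neg at h
  have hsome : ∀ k, ∃ v, osq M N x k = some v := by
    intro k
    cases hh : osq M N x k with
    | none => exact absurd hh (h k)
    | some v => exact ⟨v, rfl⟩
  classical
  let f : Fin (Fintype.card V + 1) → V := fun i => (hsome i).choose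
  have hf : Function.Injective f := by
    intro i j hij
    by_contra hne
    rcases Nat.lt_or_ge i.val j.val with hlt | hge
    · exact osq_inj hMu hNu hxM j.val i.val (f i) hlt (hsome i).choose_spec
        (by rw [hij]; exact (hsome j).choose_spec)
    · have hlt : (j : ℕ) < (i : ℕ) := by
        rcases Nat.lt_or_ge j.val i.val with h' | h'
        · exact h'
        · exact absurd (Fin.ext (le_antisymm hge h')).symm hne
      exact osq_inj hMu hNu hxM i.val j.val (f j) hlt (hsome j).choose_spec
        (by rw [← hij]; exact (hsome i).choose_spec)
  have := Fintype.card_le_of_injective f hf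
  simp at this

/-- the orbit as a vertex set -/
def Orb (M N : SimpleGraph V) (x : V) : Set V := {v | ∃ k, osq M N x k = some v}

lemma x_mem_orb : x ∈ Orb M N x := ⟨0, osq_zero⟩

/-- index of an orbit vertex is unique -/
lemma osq_idx_unique (hMu : Uniq M) (hNu : Uniq N) (hxM : ¬ sat M x) {i j : ℕ} {v : V}
    (hi : osq M N x i = some v) (hj : osq M N x j = some v) : i = j := by
  rcases Nat.lt_trichotomy i j with h | h | h
  · exact absurd (osq_inj hMu hNu hxM j i v h hi hj) not_false
  · exact h
  · exact absurd (osq_inj hMu hNu hxM i j v h hj hi) not_false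

lemma orb_M_closed (hMu : Uniq M) (hNu : Uniq N) (hxM : ¬ sat M x) {a b : V}
    (ha : a ∈ Orb M N x) (hab : M.Adj a b) : b ∈ Orb M N x := by
  obtain ⟨j, hj⟩ := ha
  by_cases hpar : Even j
  · rcases Nat.eq_zero_or_pos j with rfl | hj0
    · rw [osq_zero, Option.some_inj] at hj
      subst hj
      exact absurd ⟨b, hab⟩ hxM
    · obtain ⟨j', rfl⟩ : ∃ j', j = j' + 1 := ⟨j - 1, by omega⟩
      obtain ⟨p, hp⟩ := osq_isSome_of_le (Nat.le_succ j') hj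
      have hE : (pgr M N j').Adj p a := osq_adj hp hj
      have hEM : M.Adj p a := by
        unfold pgr at hE
        rwa [if_neg (by simpa [Nat.even_add_one, Nat.not_even_iff_odd] using hpar)] at hE
      have : b = p := hMu hab hEM.symm
      subst this
      exact ⟨j', hp⟩
  · have : osq M N x (j+1) = some b := by
      refine osq_succ_of_adj hMu hNu hj ?_
      unfold pgr
      rwa [if_neg hpar]
    exact ⟨j+1, this⟩

lemma orb_N_closed (hMu : Uniq M) (hNu : Uniq N) (hxM : ¬ sat M x) {a b : V}
    (ha : a ∈ Orb M N x) (hab : N.Adj a b) : b ∈ Orb M N x := by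
  obtain ⟨j, hj⟩ := ha
  by_cases hpar : Even j
  · have : osq M N x (j+1) = some b := by
      refine osq_succ_of_adj hMu hNu hj ?_
      unfold pgr
      rwa [if_pos hpar]
    exact ⟨j+1, this⟩
  · rcases Nat.eq_zero_or_pos j with rfl | hj0
    · simp at hpar
    · obtain ⟨j', rfl⟩ : ∃ j', j = j' + 1 := ⟨j - 1, by omega⟩
      obtain ⟨p, hp⟩ := osq_isSome_of_le (Nat.le_succ j') hj
      have hE : (pgr M N j').Adj p a := osq_adj hp hj
      have hEN : N.Adj p a := by
        unfold pgr at hE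
        rwa [if_pos (by simpa [Nat.even_add_one] using hpar)] at hE
      have : b = p := hNu hab hEN.symm
      subst this
      exact ⟨j', hp⟩

lemma adjClosed_orb (hMu : Uniq M) (hNu : Uniq N) (hxM : ¬ sat M x) :
    (∀ ⦃a b⦄, M.Adj a b → (a ∈ Orb M N x ↔ b ∈ Orb M N x)) ∧
    (∀ ⦃a b⦄, N.Adj a b → (a ∈ Orb M N x ↔ b ∈ Orb M N x)) := by
  constructor
  · intro a b hab
    exact ⟨fun h => orb_M_closed hMu hNu hxM h hab,
      fun h => orb_M_closed hMu hNu hxM h hab.symm⟩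
  · intro a b hab
    exact ⟨fun h => orb_N_closed hMu hNu hxM h hab,
      fun h => orb_N_closed hMu hNu hxM h hab.symm⟩

/-- edges of the orbit taken from `N` (even steps) -/
def ENadj (M N : SimpleGraph V) (x : V) (a b : V) : Prop :=
  ∃ k, Even k ∧ ((osq M N x k = some a ∧ osq M N x (k+1) = some b) ∨
    (osq M N x k = some b ∧ osq M N x (k+1) = some a))

/-- edges of the orbit taken from `M` (odd steps) -/
def EMadj (M N : SimpleGraph V) (x : V) (a b : V) : Prop :=
  ∃ k, ¬ Even k ∧ ((osq M N x k = some a ∧ osq M N x (k+1) = some b) ∨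
    (osq M N x k = some b ∧ osq M N x (k+1) = some a))

lemma ENadj_symm {a b : V} (h : ENadj M N x a b) : ENadj M N x b a := by
  obtain ⟨k, hk, h⟩ := h
  exact ⟨k, hk, h.symm⟩

lemma EMadj_symm {a b : V} (h : EMadj M N x a b) : EMadj M N x b a := by
  obtain ⟨k, hk, h⟩ := h
  exact ⟨k, hk, h.symm⟩

lemma ENadj_sub {a b : V} (h : ENadj M N x a b) : N.Adj a b := by
  obtain ⟨k, hk, h⟩ := h
  rcases h with ⟨h1, h2⟩ | ⟨h1, h2⟩
  · have := osq_adj h1 h2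
    unfold pgr at this
    rwa [if_pos hk] at this
  · have := osq_adj h1 h2
    unfold pgr at this
    rw [if_pos hk] at this
    exact this.symm

lemma EMadj_sub {a b : V} (h : EMadj M N x a b) : M.Adj a b := by
  obtain ⟨k, hk, h⟩ := h
  rcases h with ⟨h1, h2⟩ | ⟨h1, h2⟩
  · have := osq_adj h1 h2
    unfold pgr at this
    rwa [if_neg hk] at this
  · have := osq_adj h1 h2
    unfold pgr at this
    rw [if_neg hk] at this
    exact this.symm

lemma ENadj_orb {a b : V} (h : ENadj M N x a b) : a ∈ Orb M N x ∧ b ∈ Orb M N x := by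
  obtain ⟨k, hk, h⟩ := h
  rcases h with ⟨h1, h2⟩ | ⟨h1, h2⟩
  · exact ⟨⟨k, h1⟩, ⟨k+1, h2⟩⟩
  · exact ⟨⟨k+1, h2⟩, ⟨k, h1⟩⟩

lemma EMadj_orb {a b : V} (h : EMadj M N x a b) : a ∈ Orb M N x ∧ b ∈ Orb M N x := by
  obtain ⟨k, hk, h⟩ := h
  rcases h with ⟨h1, h2⟩ | ⟨h1, h2⟩
  · exact ⟨⟨k, h1⟩, ⟨k+1, h2⟩⟩
  · exact ⟨⟨k+1, h2⟩, ⟨k, h1⟩⟩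

end orbit2

section orbit3
variable {G M N : SimpleGraph V} {x : V}

lemma EM_char (hMu : Uniq M) (hNu : Uniq N) (hxM : ¬ sat M x) {a b : V}
    (hab : M.Adj a b) (ha : a ∈ Orb M N x) : EMadj M N x a b := by
  obtain ⟨j, hj⟩ := ha
  by_cases hpar : Even j
  · rcases Nat.eq_zero_or_pos j with rfl | hj0
    · rw [osq_zero, Option.some_inj] at hj
      subst hj
      exact absurd ⟨b, hab⟩ hxM
    · obtain ⟨j', rfl⟩ : ∃ j', j = j' + 1 := ⟨j - 1, by omega⟩
      obtain ⟨p, hp⟩ := osq_isSome_of_le (Nat.le_succ j') hj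
      have hE : (pgr M N j').Adj p a := osq_adj hp hj
      have hodd : ¬ Even j' := by
        simpa [Nat.even_add_one] using hpar
      have hEM : M.Adj p a := by
        unfold pgr at hE
        rwa [if_neg hodd] at hE
      have hbp : b = p := hMu hab hEM.symm
      subst hbp
      exact ⟨j', hodd, Or.inr ⟨hp, hj⟩⟩
  · have hnext : osq M N x (j+1) = some b := by
      refine osq_succ_of_adj hMu hNu hj ?_
      unfold pgr
      rwa [if_neg hpar]
    exact ⟨j, hpar, Or.inl ⟨hj, hnext⟩⟩

lemma EN_char (hMu : Uniq M) (hNu : Uniq N) (hxM : ¬ sat M x) {a b : V}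
    (hab : N.Adj a b) (ha : a ∈ Orb M N x) : ENadj M N x a b := by
  obtain ⟨j, hj⟩ := ha
  by_cases hpar : Even j
  · have hnext : osq M N x (j+1) = some b := by
      refine osq_succ_of_adj hMu hNu hj ?_
      unfold pgr
      rwa [if_pos hpar]
    exact ⟨j, hpar, Or.inl ⟨hj, hnext⟩⟩
  · rcases Nat.eq_zero_or_pos j with rfl | hj0
    · simp at hpar
    · obtain ⟨j', rfl⟩ : ∃ j', j = j' + 1 := ⟨j - 1, by omega⟩
      obtain ⟨p, hp⟩ := osq_isSome_of_le (Nat.le_succ j') hj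
      have hE : (pgr M N j').Adj p a := osq_adj hp hj
      have heven : Even j' := by
        simpa [Nat.even_add_one] using hpar
      have hEN : N.Adj p a := by
        unfold pgr at hE
        rwa [if_pos heven] at hE
      have hbp : b = p := hNu hab hEN.symm
      subst hbp
      exact ⟨j', heven, Or.inr ⟨hp, hj⟩⟩

lemma ENadj_ne (hMu : Uniq M) (hNu : Uniq N) (hxM : ¬ sat M x) {a b : V}
    (h : ENadj M N x a b) : a ≠ b := by
  rintro rfl
  obtain ⟨k, hk, h⟩ := h
  rcases h with ⟨h1, h2⟩ | ⟨h1, h2⟩ <;>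
    exact osq_inj hMu hNu hxM (k+1) k a (Nat.lt_succ_self k) h1 h2

lemma EMadj_ne (hMu : Uniq M) (hNu : Uniq N) (hxM : ¬ sat M x) {a b : V}
    (h : EMadj M N x a b) : a ≠ b := by
  rintro rfl
  obtain ⟨k, hk, h⟩ := h
  rcases h with ⟨h1, h2⟩ | ⟨h1, h2⟩ <;>
    exact osq_inj hMu hNu hxM (k+1) k a (Nat.lt_succ_self k) h1 h2

lemma ENadj_uniq (hMu : Uniq M) (hNu : Uniq N) (hxM : ¬ sat M x) {a b b' : V}
    (h : ENadj M N x a b) (h' : ENadj M N x a b') : b = b' := by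
  obtain ⟨k, hk, hc⟩ := h
  obtain ⟨k', hk', hc'⟩ := h'
  rw [Nat.even_iff] at hk hk'
  rcases hc with ⟨h1, h2⟩ | ⟨h1, h2⟩ <;> rcases hc' with ⟨h1', h2'⟩ | ⟨h1', h2'⟩
  · have : k = k' := osq_idx_unique hMu hNu hxM h1 h1'
    subst this
    rw [h2, Option.some_inj] at h2'
    exact h2'
  · have : k = k' + 1 := osq_idx_unique hMu hNu hxM h1 h2'
    omega
  · have : k + 1 = k' := osq_idx_unique hMu hNu hxM h2 h1'
    omega
  · have : k + 1 = k' + 1 := osq_idx_unique hMu hNu hxM h2 h2'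
    have : k = k' := by omega
    subst this
    rw [h1, Option.some_inj] at h1'
    exact h1'

lemma EMadj_uniq (hMu : Uniq M) (hNu : Uniq N) (hxM : ¬ sat M x) {a b b' : V}
    (h : EMadj M N x a b) (h' : EMadj M N x a b') : b = b' := by
  obtain ⟨k, hk, hc⟩ := h
  obtain ⟨k', hk', hc'⟩ := h'
  rw [Nat.even_iff] at hk hk'
  rcases hc with ⟨h1, h2⟩ | ⟨h1, h2⟩ <;> rcases hc' with ⟨h1', h2'⟩ | ⟨h1', h2'⟩
  · have : k = k' := osq_idx_unique hMu hNu hxM h1 h1'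
    subst this
    rw [h2, Option.some_inj] at h2'
    exact h2'
  · have : k = k' + 1 := osq_idx_unique hMu hNu hxM h1 h2'
    omega
  · have : k + 1 = k' := osq_idx_unique hMu hNu hxM h2 h1'
    omega
  · have : k + 1 = k' + 1 := osq_idx_unique hMu hNu hxM h2 h2'
    have : k = k' := by omega
    subst this
    rw [h1, Option.some_inj] at h1'
    exact h1'

lemma not_EN_and_EM (hMu : Uniq M) (hNu : Uniq N) (hxM : ¬ sat M x) {a b : V}
    (h : ENadj M N x a b) (h' : EMadj M N x a b) : False := by
  obtain ⟨k, hk, hc⟩ := h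
  obtain ⟨k', hk', hc'⟩ := h'
  rw [Nat.even_iff] at hk hk'
  rcases hc with ⟨h1, h2⟩ | ⟨h1, h2⟩ <;> rcases hc' with ⟨h1', h2'⟩ | ⟨h1', h2'⟩
  · have e1 : k = k' := osq_idx_unique hMu hNu hxM h1 h1'
    omega
  · have e1 : k = k' + 1 := osq_idx_unique hMu hNu hxM h1 h2'
    have e2 : k + 1 = k' := osq_idx_unique hMu hNu hxM h2 h1'
    omega
  · have e1 : k + 1 = k' := osq_idx_unique hMu hNu hxM h2 h1'
    have e2 : k = k' + 1 := osq_idx_unique hMu hNu hxM h1 h2'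
    omega
  · have e1 : k + 1 = k' + 1 := osq_idx_unique hMu hNu hxM h2 h2'
    omega

/-- the `N`-orbit edges as a graph -/
def genG (M N : SimpleGraph V) (x : V) : SimpleGraph V where
  Adj a b := ENadj M N x a b ∧ a ≠ b
  symm := ⟨fun a b => by rintro ⟨h, hne⟩; exact ⟨ENadj_symm h, hne.symm⟩⟩
  loopless := ⟨fun a => by rintro ⟨-, hne⟩; exact hne rfl⟩

/-- the `M`-orbit edges as a graph -/
def gemG (M N : SimpleGraph V) (x : V) : SimpleGraph V where
  Adj a b := EMadj M N x a b ∧ a ≠ b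
  symm := ⟨fun a b => by rintro ⟨h, hne⟩; exact ⟨EMadj_symm h, hne.symm⟩⟩
  loopless := ⟨fun a => by rintro ⟨-, hne⟩; exact hne rfl⟩

lemma genG_adj (hMu : Uniq M) (hNu : Uniq N) (hxM : ¬ sat M x) {a b : V} :
    (genG M N x).Adj a b ↔ ENadj M N x a b :=
  ⟨fun h => h.1, fun h => ⟨h, ENadj_ne hMu hNu hxM h⟩⟩

lemma gemG_adj (hMu : Uniq M) (hNu : Uniq N) (hxM : ¬ sat M x) {a b : V} :
    (gemG M N x).Adj a b ↔ EMadj M N x a b :=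
  ⟨fun h => h.1, fun h => ⟨h, EMadj_ne hMu hNu hxM h⟩⟩

/-- first swapped matching : `M` off the orbit plus the `N`-edges of the orbit -/
def swapA (M N : SimpleGraph V) (x : V) : SimpleGraph V :=
  rest M (Orb M N x)ᶜ ⊔ genG M N x

/-- second swapped matching : `N` off the orbit plus the `M`-edges of the orbit -/
def swapB (M N : SimpleGraph V) (x : V) : SimpleGraph V :=
  rest N (Orb M N x)ᶜ ⊔ gemG M N x

lemma swapA_isMat (hG : IsMat G M) (hGN : IsMat G N) (hxM : ¬ sat M x) :
    IsMat G (swapA M N x) := by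
  have hMu := hG.2
  have hNu := hGN.2
  constructor
  · refine sup_le (le_trans (fun a b h => h.1) hG.1) ?_
    intro a b h
    exact hGN.1 (ENadj_sub h.1)
  · intro v w w' hw hw'
    rcases hw with hw | hw <;> rcases hw' with hw' | hw'
    · exact hMu hw.1 hw'.1
    · exact absurd (ENadj_orb hw'.1).1 hw.2.1
    · exact absurd (ENadj_orb hw.1).1 hw'.2.1
    · exact ENadj_uniq hMu hNu hxM hw.1 hw'.1

lemma swapB_isMat (hG : IsMat G M) (hGN : IsMat G N) (hxM : ¬ sat M x) :
    IsMat G (swapB M N x) := by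
  have hMu := hG.2
  have hNu := hGN.2
  constructor
  · refine sup_le (le_trans (fun a b h => h.1) hGN.1) ?_
    intro a b h
    exact hG.1 (EMadj_sub h.1)
  · intro v w w' hw hw'
    rcases hw with hw | hw <;> rcases hw' with hw' | hw'
    · exact hNu hw.1 hw'.1
    · exact absurd (EMadj_orb hw'.1).1 hw.2.1
    · exact absurd (EMadj_orb hw.1).1 hw'.2.1
    · exact EMadj_uniq hMu hNu hxM hw.1 hw'.1

lemma edgeSet_rest_orb_N (hMu : Uniq M) (hNu : Uniq N) (hxM : ¬ sat M x) :
    (rest N (Orb M N x)).edgeSet = (genG M N x).edgeSet := by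
  ext e
  induction e with
  | _ a b =>
    simp only [mem_edgeSet, rest_adj]
    constructor
    · rintro ⟨hab, ha, hb⟩
      exact ⟨EN_char hMu hNu hxM hab ha, hab.ne⟩
    · rintro ⟨h, hne⟩
      exact ⟨ENadj_sub h, (ENadj_orb h).1, (ENadj_orb h).2⟩

lemma edgeSet_rest_orb_M (hMu : Uniq M) (hNu : Uniq N) (hxM : ¬ sat M x) :
    (rest M (Orb M N x)).edgeSet = (gemG M N x).edgeSet := by
  ext e
  induction e with
  | _ a b =>
    simp only [mem_edgeSet, rest_adj]
    constructor
    · rintro ⟨hab, ha, hb⟩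
      exact ⟨EM_char hMu hNu hxM hab ha, hab.ne⟩
    · rintro ⟨h, hne⟩
      exact ⟨EMadj_sub h, (EMadj_orb h).1, (EMadj_orb h).2⟩

lemma msize_M_split (hMu : Uniq M) (hNu : Uniq N) (hxM : ¬ sat M x) :
    msize M = msize (gemG M N x) + msize (rest M (Orb M N x)ᶜ) := by
  have h1 : AdjClosed M (Orb M N x) := fun a b hab =>
    (adjClosed_orb hMu hNu hxM).1 hab
  have := msize_rest_split (G := M) h1
  rw [this]
  congr 1
  unfold msize
  rw [edgeSet_rest_orb_M hMu hNu hxM]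

lemma msize_N_split (hMu : Uniq M) (hNu : Uniq N) (hxM : ¬ sat M x) :
    msize N = msize (genG M N x) + msize (rest N (Orb M N x)ᶜ) := by
  have h1 : AdjClosed N (Orb M N x) := fun a b hab =>
    (adjClosed_orb hMu hNu hxM).2 hab
  have := msize_rest_split (G := N) h1
  rw [this]
  congr 1
  unfold msize
  rw [edgeSet_rest_orb_N hMu hNu hxM]

lemma msize_swapA (hMu : Uniq M) (hNu : Uniq N) (hxM : ¬ sat M x) :
    msize (swapA M N x) = msize (rest M (Orb M N x)ᶜ) + msize (genG M N x) := by
  unfold swapA msize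
  rw [edgeSet_sup]
  refine Set.ncard_union_eq ?_ (Set.toFinite _) (Set.toFinite _)
  rw [Set.disjoint_left]
  intro e he he'
  induction e with
  | _ a b =>
    rw [mem_edgeSet] at he he'
    exact he.2.1 (ENadj_orb he'.1).1

lemma msize_swapB (hMu : Uniq M) (hNu : Uniq N) (hxM : ¬ sat M x) :
    msize (swapB M N x) = msize (rest N (Orb M N x)ᶜ) + msize (gemG M N x) := by
  unfold swapB msize
  rw [edgeSet_sup]
  refine Set.ncard_union_eq ?_ (Set.toFinite _) (Set.toFinite _)
  rw [Set.disjoint_left]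
  intro e he he'
  induction e with
  | _ a b =>
    rw [mem_edgeSet] at he he'
    exact he.2.1 (EMadj_orb he'.1).1

end orbit3

section orbit4
variable {G M N : SimpleGraph V} {x : V} {L : ℕ} {t : V}

lemma osq_none_of_gt (hLn : osq M N x (L+1) = none) {j : ℕ} (hj : L + 1 ≤ j) :
    osq M N x j = none := by
  have key : ∀ m, osq M N x (L + 1 + m) = none := by
    intro m
    induction m with
    | zero => simpa using hLn
    | succ m ih => rw [← Nat.add_assoc]; exact osq_none_succ ih
  obtain ⟨m, rfl⟩ := Nat.exists_eq_add_of_le hj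
  exact key m

lemma osq_le_L (hLn : osq M N x (L+1) = none) {j : ℕ} {v : V}
    (hj : osq M N x j = some v) : j ≤ L := by
  by_contra hc
  rw [osq_none_of_gt hLn (by omega)] at hj
  exact absurd hj (by simp)

/-- the orbit vertex at index `k` -/
noncomputable def vv (M N : SimpleGraph V) (x : V) (k : ℕ) : V := (osq M N x k).getD x

lemma vv_eq {k : ℕ} {v : V} (h : osq M N x k = some v) : vv M N x k = v := by
  unfold vv
  rw [h]
  rfl

lemma osq_vv (hLs : osq M N x L = some t) {j : ℕ} (hj : j ≤ L) :
    osq M N x j = some (vv M N x j) := by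
  obtain ⟨b, hb⟩ := osq_isSome_of_le hj hLs
  rw [hb, vv_eq hb]

lemma card_even_lt (L : ℕ) : {k | Even k ∧ k < L}.ncard = (L+1)/2 := by
  classical
  have h : {k | Even k ∧ k < L} = ↑((Finset.range L).filter (fun k => Even k)) := by
    ext k
    simp [and_comm]
  rw [h, Set.ncard_coe_finset]
  clear h
  induction L with
  | zero => simp
  | succ n ih =>
    rw [Finset.range_add_one, Finset.filter_insert]
    by_cases hn : Even n
    · rw [if_pos hn, Finset.card_insert_of_notMem (by simp)]
      rw [Nat.even_iff] at hn
      omega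
    · rw [if_neg hn]
      rw [Nat.even_iff] at hn
      omega

lemma card_odd_lt (L : ℕ) : {k | ¬ Even k ∧ k < L}.ncard = L/2 := by
  classical
  have h : {k | ¬ Even k ∧ k < L} = ↑((Finset.range L).filter (fun k => ¬ Even k)) := by
    ext k
    simp [and_comm]
  rw [h, Set.ncard_coe_finset]
  clear h
  induction L with
  | zero => simp
  | succ n ih =>
    rw [Finset.range_add_one, Finset.filter_insert]
    by_cases hn : Even n
    · rw [if_neg (by simpa using hn)]
      rw [Nat.even_iff] at hn
      omega
    · rw [if_pos hn, Finset.card_insert_of_notMem (by simp)]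
      rw [Nat.even_iff] at hn
      omega

lemma genG_edgeSet_eq (hMu : Uniq M) (hNu : Uniq N) (hxM : ¬ sat M x)
    (hLs : osq M N x L = some t) (hLn : osq M N x (L+1) = none) :
    (genG M N x).edgeSet =
      (fun k => s(vv M N x k, vv M N x (k+1))) '' {k | Even k ∧ k < L} := by
  ext e
  induction e with
  | _ a b =>
    simp only [mem_edgeSet, Set.mem_image, Set.mem_setOf_eq]
    constructor
    · rintro ⟨⟨k, hk, hc⟩, hne⟩
      rcases hc with ⟨h1, h2⟩ | ⟨h1, h2⟩
      · refine ⟨k, ⟨hk, ?_⟩, ?_⟩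
        · have := osq_le_L hLn h2; omega
        · rw [vv_eq h1, vv_eq h2]
      · refine ⟨k, ⟨hk, ?_⟩, ?_⟩
        · have := osq_le_L hLn h2; omega
        · rw [vv_eq h1, vv_eq h2, Sym2.eq_swap]
    · rintro ⟨k, ⟨hk, hkL⟩, he⟩
      have h1 : osq M N x k = some (vv M N x k) := osq_vv hLs (by omega)
      have h2 : osq M N x (k+1) = some (vv M N x (k+1)) := osq_vv hLs (by omega)
      have hEN : ENadj M N x (vv M N x k) (vv M N x (k+1)) := ⟨k, hk, Or.inl ⟨h1, h2⟩⟩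
      have hadj : (genG M N x).Adj (vv M N x k) (vv M N x (k+1)) :=
        ⟨hEN, ENadj_ne hMu hNu hxM hEN⟩
      rw [Sym2.eq_iff] at he
      rcases he with ⟨ha, hb⟩ | ⟨ha, hb⟩
      · rw [← ha, ← hb]; exact hadj
      · rw [← ha, ← hb]; exact hadj.symm

lemma gemG_edgeSet_eq (hMu : Uniq M) (hNu : Uniq N) (hxM : ¬ sat M x)
    (hLs : osq M N x L = some t) (hLn : osq M N x (L+1) = none) :
    (gemG M N x).edgeSet =
      (fun k => s(vv M N x k, vv M N x (k+1))) '' {k | ¬ Even k ∧ k < L} := by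
  ext e
  induction e with
  | _ a b =>
    simp only [mem_edgeSet, Set.mem_image, Set.mem_setOf_eq]
    constructor
    · rintro ⟨⟨k, hk, hc⟩, hne⟩
      rcases hc with ⟨h1, h2⟩ | ⟨h1, h2⟩
      · refine ⟨k, ⟨hk, ?_⟩, ?_⟩
        · have := osq_le_L hLn h2; omega
        · rw [vv_eq h1, vv_eq h2]
      · refine ⟨k, ⟨hk, ?_⟩, ?_⟩
        · have := osq_le_L hLn h2; omega
        · rw [vv_eq h1, vv_eq h2, Sym2.eq_swap]
    · rintro ⟨k, ⟨hk, hkL⟩, he⟩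
      have h1 : osq M N x k = some (vv M N x k) := osq_vv hLs (by omega)
      have h2 : osq M N x (k+1) = some (vv M N x (k+1)) := osq_vv hLs (by omega)
      have hEM : EMadj M N x (vv M N x k) (vv M N x (k+1)) := ⟨k, hk, Or.inl ⟨h1, h2⟩⟩
      have hadj : (gemG M N x).Adj (vv M N x k) (vv M N x (k+1)) :=
        ⟨hEM, EMadj_ne hMu hNu hxM hEM⟩
      rw [Sym2.eq_iff] at he
      rcases he with ⟨ha, hb⟩ | ⟨ha, hb⟩
      · rw [← ha, ← hb]; exact hadj
      · rw [← ha, ← hb]; exact hadj.symm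

lemma vvmap_injOn (hMu : Uniq M) (hNu : Uniq N) (hxM : ¬ sat M x)
    (hLs : osq M N x L = some t) (s : Set ℕ) (hs : ∀ k ∈ s, k < L) :
    Set.InjOn (fun k => s(vv M N x k, vv M N x (k+1))) s := by
  intro k hk k' hk' he
  have h1 : osq M N x k = some (vv M N x k) := osq_vv hLs (le_of_lt (hs k hk))
  have h2 : osq M N x (k+1) = some (vv M N x (k+1)) :=
    osq_vv hLs (by have := hs k hk; omega)
  have h1' : osq M N x k' = some (vv M N x k') := osq_vv hLs (le_of_lt (hs k' hk'))
  have h2' : osq M N x (k'+1) = some (vv M N x (k'+1)) :=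
    osq_vv hLs (by have := hs k' hk'; omega)
  simp only [Sym2.eq_iff] at he
  rcases he with ⟨ha, hb⟩ | ⟨ha, hb⟩
  · rw [ha] at h1
    exact osq_idx_unique hMu hNu hxM h1 h1'
  · rw [ha] at h1
    rw [hb] at h2
    have e1 : k = k' + 1 := osq_idx_unique hMu hNu hxM h1 h2'
    have e2 : k + 1 = k' := osq_idx_unique hMu hNu hxM h2 h1'
    omega

lemma msize_genG_eq (hMu : Uniq M) (hNu : Uniq N) (hxM : ¬ sat M x)
    (hLs : osq M N x L = some t) (hLn : osq M N x (L+1) = none) :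
    msize (genG M N x) = (L+1)/2 := by
  unfold msize
  rw [genG_edgeSet_eq hMu hNu hxM hLs hLn]
  rw [Set.ncard_image_of_injOn (vvmap_injOn hMu hNu hxM hLs _ (fun k hk => hk.2))]
  exact card_even_lt L

lemma msize_gemG_eq (hMu : Uniq M) (hNu : Uniq N) (hxM : ¬ sat M x)
    (hLs : osq M N x L = some t) (hLn : osq M N x (L+1) = none) :
    msize (gemG M N x) = L/2 := by
  unfold msize
  rw [gemG_edgeSet_eq hMu hNu hxM hLs hLn]
  rw [Set.ncard_image_of_injOn (vvmap_injOn hMu hNu hxM hLs _ (fun k hk => hk.2))]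
  exact card_odd_lt L

end orbit4

section orbit5
variable {G M N : SimpleGraph V} {x : V} {L : ℕ} {t : V}

lemma not_sat_end_M (hLs : osq M N x L = some t) (hLn : osq M N x (L+1) = none)
    (hLodd : ¬ Even L) : ¬ sat M t := by
  rw [osq_succ_eq, hLs, Option.bind_some] at hLn
  rw [pn_none_iff] at hLn
  unfold pgr at hLn
  rwa [if_neg hLodd] at hLn

lemma not_sat_end_N (hLs : osq M N x L = some t) (hLn : osq M N x (L+1) = none)
    (hLeven : Even L) : ¬ sat N t := by
  rw [osq_succ_eq, hLs, Option.bind_some] at hLn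
  rw [pn_none_iff] at hLn
  unfold pgr at hLn
  rwa [if_pos hLeven] at hLn

lemma sat_N_of_orb (hMu : Uniq M) (hNu : Uniq N) (hxM : ¬ sat M x)
    (hLs : osq M N x L = some t) (hLn : osq M N x (L+1) = none)
    {v : V} (hv : v ∈ Orb M N x) (hvt : v ≠ t) : sat N v := by
  obtain ⟨j, hj⟩ := hv
  have hjL : j ≤ L := osq_le_L hLn hj
  by_cases hpar : Even j
  · have hjne : j ≠ L := by
      rintro rfl
      rw [hj, Option.some_inj] at hLs
      exact hvt hLs
    have hjlt : j + 1 ≤ L := by omega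
    have hnext : osq M N x (j+1) = some (vv M N x (j+1)) := osq_vv hLs hjlt
    have hadj := osq_adj hj hnext
    unfold pgr at hadj
    rw [if_pos hpar] at hadj
    exact ⟨_, hadj⟩
  · have hj1 : j ≠ 0 := by rintro rfl; exact hpar (by decide)
    obtain ⟨j', rfl⟩ : ∃ j', j = j' + 1 := ⟨j - 1, by omega⟩
    obtain ⟨p, hp⟩ := osq_isSome_of_le (Nat.le_succ j') hj
    have hadj := osq_adj hp hj
    unfold pgr at hadj
    rw [if_pos (by simpa [Nat.even_add_one] using hpar)] at hadj
    exact ⟨p, hadj.symm⟩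

lemma sat_M_of_orb (hMu : Uniq M) (hNu : Uniq N) (hxM : ¬ sat M x)
    (hLs : osq M N x L = some t) (hLn : osq M N x (L+1) = none) (hLeven : Even L)
    {v : V} (hv : v ∈ Orb M N x) (hvx : v ≠ x) : sat M v := by
  obtain ⟨j, hj⟩ := hv
  have hjL : j ≤ L := osq_le_L hLn hj
  by_cases hpar : Even j
  · rcases Nat.eq_zero_or_pos j with rfl | hj0
    · rw [osq_zero, Option.some_inj] at hj
      exact absurd hj.symm hvx
    · obtain ⟨j', rfl⟩ : ∃ j', j = j' + 1 := ⟨j - 1, by omega⟩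
      obtain ⟨p, hp⟩ := osq_isSome_of_le (Nat.le_succ j') hj
      have hadj := osq_adj hp hj
      unfold pgr at hadj
      rw [if_neg (by simpa [Nat.even_add_one] using hpar)] at hadj
      exact ⟨p, hadj.symm⟩
  · have hjne : j ≠ L := by
      rintro rfl
      exact hpar hLeven
    have hjlt : j + 1 ≤ L := by omega
    have hnext : osq M N x (j+1) = some (vv M N x (j+1)) := osq_vv hLs hjlt
    have hadj := osq_adj hj hnext
    unfold pgr at hadj
    rw [if_neg hpar] at hadj
    exact ⟨_, hadj⟩

lemma not_sat_swapA_nonorb {v : V} (hv : v ∉ Orb M N x) (hvM : ¬ sat M v) :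
    ¬ sat (swapA M N x) v := by
  rintro ⟨w, hw | hw⟩
  · exact hvM ⟨w, hw.1⟩
  · exact hv (ENadj_orb hw.1).1

lemma not_sat_swapB_nonorb {v : V} (hv : v ∉ Orb M N x) (hvN : ¬ sat N v) :
    ¬ sat (swapB M N x) v := by
  rintro ⟨w, hw | hw⟩
  · exact hvN ⟨w, hw.1⟩
  · exact hv (EMadj_orb hw.1).1

lemma not_sat_swapA_end (hMu : Uniq M) (hNu : Uniq N) (hxM : ¬ sat M x)
    (hLs : osq M N x L = some t) (hLn : osq M N x (L+1) = none) (hLeven : Even L) :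
    ¬ sat (swapA M N x) t := by
  rintro ⟨w, hw | hw⟩
  · exact hw.2.1 ⟨L, hLs⟩
  · obtain ⟨k, hk, hc⟩ := hw.1
    rcases hc with ⟨h1, h2⟩ | ⟨h1, h2⟩
    · have : k = L := osq_idx_unique hMu hNu hxM h1 hLs
      subst this
      rw [hLn] at h2
      exact absurd h2 (by simp)
    · have : k + 1 = L := osq_idx_unique hMu hNu hxM h2 hLs
      rw [Nat.even_iff] at hk hLeven
      omega

lemma msize_inf_swapB (hMu : Uniq M) (hNu : Uniq N) (hxM : ¬ sat M x) :
    msize (M ⊓ swapB M N x) = msize (M ⊓ N) + msize (gemG M N x) := by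
  have horb : ∀ ⦃a b : V⦄, M.Adj a b → N.Adj a b → a ∉ Orb M N x := by
    intro a b hM' hN' ha
    exact not_EN_and_EM hMu hNu hxM (EN_char hMu hNu hxM hN' ha) (EM_char hMu hNu hxM hM' ha)
  have hset : (M ⊓ swapB M N x).edgeSet = (M ⊓ N).edgeSet ∪ (gemG M N x).edgeSet := by
    ext e
    induction e with
    | _ a b =>
      simp only [mem_edgeSet, Set.mem_union, inf_adj]
      constructor
      · rintro ⟨hMadj, hw | hw⟩
        · exact Or.inl ⟨hMadj, hw.1⟩
        · exact Or.inr hw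
      · rintro (⟨hMadj, hNadj⟩ | hw)
        · refine ⟨hMadj, Or.inl ⟨hNadj, horb hMadj hNadj, ?_⟩⟩
          exact horb hMadj.symm hNadj.symm
        · exact ⟨EMadj_sub hw.1, Or.inr hw⟩
  unfold msize
  rw [hset]
  refine Set.ncard_union_eq ?_ (Set.toFinite _) (Set.toFinite _)
  rw [Set.disjoint_left]
  intro e he he'
  induction e with
  | _ a b =>
    rw [mem_edgeSet] at he he'
    rw [inf_adj] at he
    exact horb he.1 he.2 (EMadj_orb he'.1).1

lemma gem_nonempty (hMu : Uniq M) (hNu : Uniq N) (hxM : ¬ sat M x)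
    (hLs : osq M N x L = some t) (hL2 : 2 ≤ L) : 1 ≤ msize (gemG M N x) := by
  have e1 : (1:ℕ) ≤ L := by omega
  have e2 : (2:ℕ) ≤ L := by omega
  have h1 : osq M N x 1 = some (vv M N x 1) := osq_vv hLs e1
  have h2 : osq M N x 2 = some (vv M N x 2) := osq_vv hLs e2
  have hEM : EMadj M N x (vv M N x 1) (vv M N x 2) := ⟨1, by decide, Or.inl ⟨h1, h2⟩⟩
  have hmem : s(vv M N x 1, vv M N x 2) ∈ (gemG M N x).edgeSet := by
    rw [mem_edgeSet]
    exact ⟨hEM, EMadj_ne hMu hNu hxM hEM⟩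
  unfold msize
  have := (Set.ncard_pos (s := (gemG M N x).edgeSet) (Set.toFinite _)).mpr ⟨_, hmem⟩
  omega
end orbit5

section gallai
variable {G : SimpleGraph V}

/-- Gallai's lemma: if every vertex is missed by some maximum matching, then no maximum
matching misses two distinct vertices in the same component. -/
theorem gallai_no_two_unsat (G : SimpleGraph V)
    (hmiss : ∀ z : V, ∃ N, IsMat G N ∧ msize N = matNum G ∧ ¬ sat N z) :
    ¬ ∃ (M : SimpleGraph V) (x y : V), IsMat G M ∧ msize M = matNum G ∧ x ≠ y ∧
      G.Reachable x y ∧ ¬ sat M x ∧ ¬ sat M y := by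
  classical
  intro hex
  set D := {k : ℕ | ∃ M x y, (IsMat G M ∧ msize M = matNum G ∧ x ≠ y ∧
      G.Reachable x y ∧ ¬ sat M x ∧ ¬ sat M y) ∧ k = G.dist x y} with hDdef
  have hD : D.Nonempty := by
    obtain ⟨M, x, y, h⟩ := hex
    exact ⟨G.dist x y, M, x, y, h, rfl⟩
  have hmem := Nat.sInf_mem hD
  obtain ⟨M, x, y, ⟨hM, hMmax, hxy, hreach, hx, hy⟩, hdist⟩ := hmem
  have hmin : ∀ (M' : SimpleGraph V) (x' y' : V), IsMat G M' → msize M' = matNum G →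
      x' ≠ y' → G.Reachable x' y' → ¬ sat M' x' → ¬ sat M' y' →
      sInf D ≤ G.dist x' y' := by
    intro M' x' y' h1 h2 h3 h4 h5 h6
    exact Nat.sInf_le ⟨M', x', y', ⟨h1, h2, h3, h4, h5, h6⟩, rfl⟩
  have haug : ∀ (K : SimpleGraph V) (a b : V), IsMat G K → msize K = matNum G →
      ¬ sat K a → ¬ sat K b → ¬ G.Adj a b := by
    intro K a b hK hKmax ha hb hadj
    obtain ⟨h1, h2⟩ := isMat_insert hK hadj ha hb
    have := le_matNum h1
    omega
  have hnadj : ¬ G.Adj x y := haug M x y hM hMmax hx hy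
  have hd0 : G.dist x y ≠ 0 := by
    rw [ne_eq, dist_eq_zero_iff_eq_or_not_reachable]
    push_neg
    exact ⟨hxy, hreach⟩
  have hd1 : G.dist x y ≠ 1 := fun h1 => hnadj (dist_eq_one_iff_adj.mp h1)
  have hd2 : 2 ≤ G.dist x y := by omega
  obtain ⟨p, hp⟩ := hreach.exists_walk_length_eq_dist
  cases p with
  | nil =>
    rw [Walk.length_nil] at hp
    omega
  | @cons _ z _ hadjxz q =>
    rw [Walk.length_cons] at hp
    have hzx : z ≠ x := hadjxz.ne'
    have hzy : z ≠ y := by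
      rintro rfl
      exact hnadj hadjxz
    have hdzy : G.dist z y ≤ q.length := dist_le q
    have hreach_zy : G.Reachable z y := ⟨q⟩
    have hsatz : sat M z := by
      by_contra hzns
      have := hmin M z y hM hMmax hzy hreach_zy hzns hy
      omega
    -- choose N missing z with maximal overlap with M
    set T := {k : ℕ | ∃ N, (IsMat G N ∧ msize N = matNum G ∧ ¬ sat N z) ∧
        k = msize (M ⊓ N)} with hTdef
    have hT : T.Nonempty := by
      obtain ⟨N, hN⟩ := hmiss z
      exact ⟨_, N, hN, rfl⟩
    have hTb : BddAbove T := by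
      refine ⟨msize G, ?_⟩
      rintro k ⟨N, hN, rfl⟩
      exact msize_le_of_le (le_trans inf_le_left hM.1)
    have hTmem := Nat.sSup_mem hT hTb
    obtain ⟨N, ⟨hN, hNmax, hNz⟩, hNval⟩ := hTmem
    have hNbest : ∀ N', IsMat G N' → msize N' = matNum G → ¬ sat N' z →
        msize (M ⊓ N') ≤ msize (M ⊓ N) := by
      intro N' h1 h2 h3
      have := le_csSup hTb (show msize (M ⊓ N') ∈ T from ⟨N', ⟨h1, h2, h3⟩, rfl⟩)
      omega
    have hNx : sat N x := by
      by_contra hxns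
      have hxz : x ≠ z := fun h => hzx h.symm
      have hrxz : G.Reachable x z := hadjxz.reachable
      have h1 := hmin N x z hN hNmax hxz hrxz hxns hNz
      have h2 : G.dist x z ≤ 1 := by
        have := dist_le (Walk.cons hadjxz Walk.nil)
        simpa using this
      omega
    -- the orbit
    have hMu := hM.2
    have hNu := hN.2
    have hne : ∃ k, osq M N x k = none := osq_exists_none hMu hNu hx
    set F := Nat.find hne with hFdef
    have hFnone : osq M N x F = none := Nat.find_spec hne
    have hF0 : F ≠ 0 := by
      intro h0
      rw [h0, osq_zero] at hFnone
      exact absurd hFnone (by simp)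
    have hF1 : F ≠ 1 := by
      intro h1
      rw [h1, osq_succ_eq, osq_zero, Option.bind_some, pn_none_iff] at hFnone
      unfold pgr at hFnone
      rw [if_pos (by decide)] at hFnone
      exact hFnone hNx
    have hF2 : 2 ≤ F := by omega
    set L := F - 1 with hLdef
    have hLn : osq M N x (L+1) = none := by
      rw [show L + 1 = F by omega]
      exact hFnone
    obtain ⟨t, hLs⟩ : ∃ t, osq M N x L = some t := by
      cases hh : osq M N x L with
      | none => exact absurd hh (Nat.find_min hne (by omega))
      | some b => exact ⟨b, rfl⟩
    have hL1 : 1 ≤ L := by omega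
    by_cases hLpar : Even L
    · -- L even : even alternating path ; t is N-unsaturated
      have htN : ¬ sat N t := not_sat_end_N hLs hLn hLpar
      have hyOrb : y ∉ Orb M N x := by
        intro hyo
        exact hy (sat_M_of_orb hMu hNu hx hLs hLn hLpar hyo (fun h => hxy h.symm))
      have hcount : msize (genG M N x) = msize (gemG M N x) := by
        rw [msize_genG_eq hMu hNu hx hLs hLn, msize_gemG_eq hMu hNu hx hLs hLn]
        rw [Nat.even_iff] at hLpar
        omega
      by_cases htz : t = z
      · -- use swapA : a maximum matching missing both z and y
        subst htz
        have hA := swapA_isMat hM hN hx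
        have hAsize : msize (swapA M N x) = matNum G := by
          have hsplit := msize_M_split hMu hNu hx
          rw [msize_swapA hMu hNu hx, hcount]
          omega
        have hAz : ¬ sat (swapA M N x) t := not_sat_swapA_end hMu hNu hx hLs hLn hLpar
        have hAy : ¬ sat (swapA M N x) y := not_sat_swapA_nonorb hyOrb hy
        have := hmin (swapA M N x) t y hA hAsize hzy hreach_zy hAz hAy
        omega
      · -- use swapB : a maximum matching missing z with larger overlap with M
        have hzOrb : z ∉ Orb M N x := by
          intro hzo
          exact hNz (sat_N_of_orb hMu hNu hx hLs hLn hzo (fun h => htz h.symm))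
        have hB := swapB_isMat hM hN hx
        have hBsize : msize (swapB M N x) = matNum G := by
          rw [msize_swapB hMu hNu hx]
          have hsplit := msize_N_split hMu hNu hx
          rw [hcount] at hsplit
          omega
        have hBz : ¬ sat (swapB M N x) z := not_sat_swapB_nonorb hzOrb hNz
        have hover := hNbest (swapB M N x) hB hBsize hBz
        have hval : msize (M ⊓ swapB M N x) = msize (M ⊓ N) + msize (gemG M N x) :=
          msize_inf_swapB hMu hNu hx
        have hgem1 : 1 ≤ msize (gemG M N x) :=
          gem_nonempty hMu hNu hx hLs (by
            rw [Nat.even_iff] at hLpar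
            omega)
        omega
    · -- L odd : augmenting path, contradiction with maximality of M
      have hA := swapA_isMat hM hN hx
      have hAsize : msize (swapA M N x) = msize M + 1 := by
        rw [msize_swapA hMu hNu hx]
        have hsplit := msize_M_split hMu hNu hx
        have hgen := msize_genG_eq hMu hNu hx hLs hLn
        have hgem := msize_gemG_eq hMu hNu hx hLs hLn
        rw [Nat.even_iff] at hLpar
        omega
      have := le_matNum hA
      omega
end gallai

section matops
variable {G : SimpleGraph V} {s : Set V} {v : V}

lemma isMat_of_rest {K : SimpleGraph V} (h : IsMat (rest G s) K) : IsMat G K :=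
  ⟨le_trans h.1 (rest_le G s), h.2⟩

lemma isMat_rest {M : SimpleGraph V} (h : IsMat G M) : IsMat G (rest M s) :=
  ⟨le_trans (rest_le M s) h.1, fun v w w' hw hw' => h.2 hw.1 hw'.1⟩

/-- adding a matching contained in a closed set to a maximum matching of the complement -/
lemma matNum_compl_add (M₁ : SimpleGraph V) (h1 : IsMat G M₁)
    (hin : ∀ ⦃a b⦄, M₁.Adj a b → a ∈ s) :
    matNum (rest G sᶜ) + msize M₁ ≤ matNum G := by
  obtain ⟨K, hK, hKmax⟩ := exists_max_matching (rest G sᶜ)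
  have hKG : IsMat G K := isMat_of_rest hK
  have hKout : ∀ ⦃a b⦄, K.Adj a b → a ∉ s := fun a b h => (hK.1 h).2.1
  have hsup : IsMat G (M₁ ⊔ K) := isMat_sup h1 hKG hin hKout
  have hdisj : Disjoint M₁.edgeSet K.edgeSet := by
    rw [Set.disjoint_left]
    intro e he he'
    induction e with
    | _ a b =>
      rw [mem_edgeSet] at he he'
      exact hKout he' (hin he)
  have := le_matNum hsup
  rw [msize_sup_of_disjoint hdisj] at this
  omega

/-- the edges at `v` number `ndeg G v` -/
lemma msize_delete_vertex (G : SimpleGraph V) (v : V) :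
    msize G = msize (rest G {v}ᶜ) + ndeg G v := by
  have hsplit : G.edgeSet = (rest G {v}ᶜ).edgeSet ∪ {e ∈ G.edgeSet | v ∈ e} := by
    ext e
    induction e with
    | _ a b =>
      simp only [Set.mem_union, mem_edgeSet, rest_adj, Set.mem_setOf_eq,
        Set.mem_compl_iff, Set.mem_singleton_iff, Sym2.mem_iff]
      constructor
      · intro h
        by_cases hav : a = v
        · exact Or.inr ⟨h, Or.inl hav.symm⟩
        · by_cases hbv : b = v
          · exact Or.inr ⟨h, Or.inr hbv.symm⟩
          · exact Or.inl ⟨h, hav, hbv⟩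
      · rintro (⟨h, -, -⟩ | ⟨h, -⟩) <;> exact h
  have hdisj : Disjoint (rest G {v}ᶜ).edgeSet {e ∈ G.edgeSet | v ∈ e} := by
    rw [Set.disjoint_left]
    intro e he he'
    induction e with
    | _ a b =>
      rw [mem_edgeSet] at he
      obtain ⟨-, hv⟩ := he'
      rw [Sym2.mem_iff] at hv
      rcases hv with rfl | rfl
      · exact he.2.1 rfl
      · exact he.2.2 rfl
  have himg : {e ∈ G.edgeSet | v ∈ e} = (fun w => s(v,w)) '' (G.neighborSet v) := by
    ext e
    induction e with
    | _ a b =>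
      simp only [Set.mem_setOf_eq, mem_edgeSet, Set.mem_image, mem_neighborSet, Sym2.mem_iff]
      constructor
      · rintro ⟨hadj, rfl | rfl⟩
        · exact ⟨b, hadj, rfl⟩
        · exact ⟨a, hadj.symm, Sym2.eq_swap⟩
      · rintro ⟨w, hw, he⟩
        rw [Sym2.eq_iff] at he
        rcases he with ⟨rfl, rfl⟩ | ⟨rfl, rfl⟩
        · exact ⟨hw, Or.inl rfl⟩
        · exact ⟨hw.symm, Or.inr rfl⟩
  have hinj : Set.InjOn (fun w => s(v,w)) (G.neighborSet v) := by
    intro a _ b _ hab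
    rcases Sym2.eq_iff.mp hab with ⟨-, h⟩ | ⟨h1, h2⟩
    · exact h
    · exact h2.trans h1
  unfold msize ndeg
  rw [hsplit, Set.ncard_union_eq hdisj (Set.toFinite _) (Set.toFinite _), himg,
    Set.ncard_image_of_injOn hinj]

/-- if no maximum matching misses `v`, deleting `v` decreases the matching number -/
lemma matNum_delete_essential (hv : ¬ ∃ K, IsMat G K ∧ msize K = matNum G ∧ ¬ sat K v) :
    matNum (rest G {v}ᶜ) + 1 ≤ matNum G := by
  obtain ⟨K, hK, hKmax⟩ := exists_max_matching (rest G {v}ᶜ)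
  have hKG : IsMat G K := isMat_of_rest hK
  have hKv : ¬ sat K v := by
    rintro ⟨w, hw⟩
    exact (hK.1 hw).2.1 rfl
  have hle := le_matNum hKG
  rcases Nat.lt_or_ge (msize K) (matNum G) with h | h
  · omega
  · exact absurd ⟨K, hKG, le_antisymm hle h, hKv⟩ hv

lemma exists_edge_of_msize_pos (h : 1 ≤ msize G) : ∃ a b, G.Adj a b := by
  have h' : 0 < G.edgeSet.ncard := by unfold msize at h; omega
  obtain ⟨e, he⟩ := (Set.ncard_pos (Set.toFinite _)).mp h'
  induction e with
  | _ a b =>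
    rw [mem_edgeSet] at he
    exact ⟨a, b, he⟩

lemma adjClosed_reach (G : SimpleGraph V) (u : V) :
    AdjClosed G {w | G.Reachable u w} := by
  intro a b hab
  simp only [Set.mem_setOf_eq]
  exact ⟨fun h => h.trans hab.reachable, fun h => h.trans hab.symm.reachable⟩

lemma sum_ndeg_rest_le {C : Set V} (b : ℕ)
    (hb : ∀ v ∈ C, ndeg (rest G C) v ≤ b) :
    ∑ v, ndeg (rest G C) v ≤ C.ncard * b := by
  classical
  have hz : ∀ v, v ∉ C → ndeg (rest G C) v = 0 := by
    intro v hv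
    unfold ndeg
    rw [Set.ncard_eq_zero (Set.toFinite _)]
    ext w
    simp only [mem_neighborSet, rest_adj, Set.mem_empty_iff_false, iff_false]
    rintro ⟨-, hv', -⟩
    exact hv hv'
  calc ∑ v, ndeg (rest G C) v
      ≤ ∑ v, (if v ∈ C then b else 0) := by
        refine Finset.sum_le_sum fun v _ => ?_
        by_cases hv : v ∈ C
        · rw [if_pos hv]; exact hb v hv
        · rw [if_neg hv, hz v hv]
    _ = C.ncard * b := by
        have hCt : C.toFinset = Finset.univ.filter (fun v => v ∈ C) := by
          ext w
          simp
        rw [Finset.sum_ite, Finset.sum_const_zero, add_zero, Finset.sum_const, smul_eq_mul,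
          Set.ncard_eq_toFinset_card', hCt]

lemma ndeg_rest_lt_card {C : Set V} (hv : v ∈ C) :
    ndeg (rest G C) v ≤ C.ncard - 1 := by
  have hsub : (rest G C).neighborSet v ⊆ C \ {v} := by
    rintro w ⟨hadj, -, hw⟩
    refine ⟨hw, ?_⟩
    intro hwv
    rw [Set.mem_singleton_iff] at hwv
    subst hwv
    exact G.loopless.irrefl w hadj
  calc ndeg (rest G C) v ≤ (C \ {v}).ncard := Set.ncard_le_ncard hsub (Set.toFinite _)
    _ = C.ncard - 1 := by
        rw [Set.ncard_diff (by simpa using hv) (Set.toFinite _)]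
        simp

end matops

section mainind
variable {G : SimpleGraph V}

-- component arithmetic for the terminal case

lemma compB_arith {eC k d cc : ℕ} (hk : 1 ≤ k) (hcc : cc ≤ 2*k+1)
    (h1 : 2*eC ≤ cc * d) (h2 : 2*eC ≤ cc * (cc - 1)) :
    eC ≤ k * (d+1) ∧ (¬ Even d → eC + 1 ≤ k * (d+1)) := by
  have h1' : 2*eC ≤ (2*k+1) * d := le_trans h1 (Nat.mul_le_mul_right d hcc)
  have h2' : 2*eC ≤ (2*k+1) * (2*k) := by
    refine le_trans h2 (Nat.mul_le_mul hcc (by omega))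
  rcases Nat.even_or_odd d with ⟨t, rfl⟩ | ⟨t, rfl⟩
  · -- d = 2t even
    constructor
    · rcases le_or_gt (2*k+1) (t+t) with h | h
      · -- 2k+1 ≤ d : use clique bound
        have : 2*eC ≤ (2*k+1)*(2*k) := h2'
        nlinarith
      · -- d ≤ 2k : use degree bound
        have ht : t ≤ k := by omega
        nlinarith
    · intro hodd
      exact absurd ⟨t, by ring⟩ hodd
  · -- d = 2t+1 odd
    have hd : 2*t+1 = t+t+1 := by ring
    constructor
    · rcases le_or_gt (2*k) (2*t) with h | h
      · nlinarith
      · nlinarith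
    · intro _
      rcases le_or_gt (2*k) (2*t) with h | h
      · -- 2k ≤ 2t i.e. k ≤ t : clique bound
        nlinarith
      · -- t < k : degree bound with parity
        have hoddprod : Odd ((2*k+1)*(2*t+1)) := Odd.mul ⟨k, by ring⟩ ⟨t, by ring⟩
        obtain ⟨m, hm⟩ := hoddprod
        have h1'' : 2*eC + 1 ≤ (2*k+1)*(2*t+1) := by omega
        nlinarith


/-- The main bound: a graph with maximum degree at most `d` has at most `ν(d+1)` edges,
and at most `ν(d+1) - 1` when `d` is odd. -/
theorem main_bound (d : ℕ) :
    ∀ (n : ℕ) (G : SimpleGraph V), msize G ≤ n → (∀ v, ndeg G v ≤ d) →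
      msize G ≤ matNum G * (d+1) ∧
        (¬ Even d → 1 ≤ msize G → msize G + 1 ≤ matNum G * (d+1)) := by
  intro n
  induction n with
  | zero =>
    intro G hGn hdeg
    constructor
    · omega
    · intro _ h1
      omega
  | succ n IH =>
    intro G hGn hdeg
    rcases Nat.eq_zero_or_pos (msize G) with h0 | hpos
    · constructor
      · omega
      · intro _ h1
        omega
    by_cases hcase : ∃ v, 1 ≤ ndeg G v ∧ ¬ ∃ K, IsMat G K ∧ msize K = matNum G ∧ ¬ sat K v
    · -- Case A : an essential non-isolated vertex exists ; delete it
      obtain ⟨v, hv1, hvess⟩ := hcase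
      have hsplit := msize_delete_vertex G v
      have hdeg' : ∀ w, ndeg (rest G {v}ᶜ) w ≤ d :=
        fun w => le_trans (ndeg_le_of_le (rest_le G _) w) (hdeg w)
      have hrec : msize (rest G {v}ᶜ) ≤ n := by omega
      obtain ⟨IH1, -⟩ := IH (rest G {v}ᶜ) hrec hdeg'
      have hν := matNum_delete_essential hvess
      have hm : (matNum (rest G {v}ᶜ) + 1) * (d+1) ≤ matNum G * (d+1) :=
        Nat.mul_le_mul_right _ hν
      have hexp : (matNum (rest G {v}ᶜ) + 1) * (d+1)
          = matNum (rest G {v}ᶜ) * (d+1) + (d+1) := by ring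
      have hdv : ndeg G v ≤ d := hdeg v
      constructor
      · linarith
      · intro _ _
        linarith
    · -- Case B : every non-isolated vertex is missed by some maximum matching
      push_neg at hcase
      have hmiss : ∀ z, ∃ K, IsMat G K ∧ msize K = matNum G ∧ ¬ sat K z := by
        intro z
        rcases Nat.eq_zero_or_pos (ndeg G z) with hz | hz
        · obtain ⟨K, hK, hKmax⟩ := exists_max_matching G
          refine ⟨K, hK, hKmax, ?_⟩
          rintro ⟨w, hw⟩
          have hmem : w ∈ G.neighborSet z := hK.1 hw
          have he : (G.neighborSet z) = ∅ := by
            unfold ndeg at hz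
            exact (Set.ncard_eq_zero (Set.toFinite _)).mp (by omega)
          rw [he] at hmem
          exact hmem
        · exact hcase z hz
      obtain ⟨M, hM, hMmax⟩ := exists_max_matching G
      obtain ⟨u₀, v₀, huv⟩ := exists_edge_of_msize_pos hpos
      set C := {w | G.Reachable u₀ w} with hCdef
      have hCG : AdjClosed G C := adjClosed_reach G u₀
      have hCM : AdjClosed M C := fun a b hab => hCG (hM.1 hab)
      have hu₀C : u₀ ∈ C := Set.mem_setOf_eq ▸ Reachable.refl u₀
      have hv₀C : v₀ ∈ C := (hCG huv).mp hu₀C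
      have hsat : sat M u₀ ∨ sat M v₀ := by
        by_contra hns
        push_neg at hns
        obtain ⟨h1, h2⟩ := isMat_insert hM huv hns.1 hns.2
        have := le_matNum h1
        omega
      have hkC : 1 ≤ msize (rest M C) := by
        have key : ∀ u : V, u ∈ C → sat M u → 1 ≤ msize (rest M C) := by
          intro u huC ⟨w, hw⟩
          have hwC : w ∈ C := (hCM hw).mp huC
          have hmem : s(u, w) ∈ (rest M C).edgeSet := by
            rw [mem_edgeSet]
            exact ⟨hw, huC, hwC⟩
          have := (Set.ncard_pos (s := (rest M C).edgeSet) (Set.toFinite _)).mpr ⟨_, hmem⟩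
          unfold msize
          omega
        rcases hsat with h | h
        · exact key u₀ hu₀C h
        · exact key v₀ hv₀C h
      have hU : {w | w ∈ C ∧ ¬ sat M w}.ncard ≤ 1 := by
        by_contra hU2
        push_neg at hU2
        obtain ⟨a, b, ha, hb, hab⟩ := (Set.one_lt_ncard_iff (Set.toFinite _)).mp hU2
        refine gallai_no_two_unsat G hmiss ⟨M, a, b, hM, hMmax, hab, ?_, ha.2, hb.2⟩
        exact (ha.1 : G.Reachable u₀ a).symm.trans hb.1
      have hsatcount := card_sat_eq hM hCM
      have hCsplit := ncard_split C (sat M)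
      have hCcard : C.ncard ≤ 2 * msize (rest M C) + 1 := by omega
      have hdegsum := sum_ndeg_eq (rest G C)
      have hb1 : ∑ w, ndeg (rest G C) w ≤ C.ncard * d :=
        sum_ndeg_rest_le d (fun w _ => le_trans (ndeg_le_of_le (rest_le G C) w) (hdeg w))
      have hb2 : ∑ w, ndeg (rest G C) w ≤ C.ncard * (C.ncard - 1) :=
        sum_ndeg_rest_le _ (fun w hw => ndeg_rest_lt_card hw)
      have harith := compB_arith (eC := msize (rest G C)) (d := d) hkC hCcard (by omega) (by omega)
      have hsplitE := msize_rest_split (G := G) hCG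
      have heC1 : 1 ≤ msize (rest G C) := by
        refine le_trans hkC (msize_le_of_le ?_)
        intro a b h
        exact ⟨hM.1 h.1, h.2⟩
      have hrec : msize (rest G Cᶜ) ≤ n := by omega
      have hdeg'' : ∀ w, ndeg (rest G Cᶜ) w ≤ d :=
        fun w => le_trans (ndeg_le_of_le (rest_le G _) w) (hdeg w)
      obtain ⟨IH1, -⟩ := IH (rest G Cᶜ) hrec hdeg''
      have hν := matNum_compl_add (s := C) (rest M C) (isMat_rest hM) (fun a b h => h.2.1)
      have hmul : (msize (rest M C) + matNum (rest G Cᶜ)) * (d+1) ≤ matNum G * (d+1) :=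
        Nat.mul_le_mul_right _ (by omega)
      have hexp : (msize (rest M C) + matNum (rest G Cᶜ)) * (d+1)
          = msize (rest M C) * (d+1) + matNum (rest G Cᶜ) * (d+1) := by ring
      constructor
      · have hA1 := harith.1
        linarith
      · intro hodd _
        have hA2 := harith.2 hodd
        linarith
end mainind

section assemble
variable {G : SimpleGraph V}

/-- build a `Subgraph` matching from a set of edges of a matching -/
lemma exists_subgraph_matching {K : SimpleGraph V} (hK : IsMat G K)
    (S : Set (Sym2 V)) (hS : S ⊆ K.edgeSet) :
    ∃ M₀ : G.Subgraph, M₀.IsMatching ∧ M₀.edgeSet = S := by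
  have hadj : ∀ ⦃a b : V⦄, s(a,b) ∈ S → K.Adj a b := by
    intro a b hab
    rw [← mem_edgeSet]
    exact hS hab
  refine ⟨{ verts := {v | ∃ e ∈ S, v ∈ e},
            Adj := fun a b => s(a,b) ∈ S,
            adj_sub := fun hab => hK.1 (hadj hab),
            edge_vert := fun {a b} hab => ⟨s(a,b), hab, Sym2.mem_mk_left a b⟩,
            symm := ⟨fun a b hab => by
              show s(b,a) ∈ S
              rw [Sym2.eq_swap]
              exact hab⟩ }, ?_, ?_⟩
  · intro v hv
    obtain ⟨e, heS, hve⟩ := hv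
    obtain ⟨w, rfl⟩ := Sym2.mem_iff_exists.mp hve
    refine ⟨w, heS, ?_⟩
    intro w' hw'
    exact hK.2 (hadj hw') (hadj heS)
  · ext e
    induction e with
    | _ a b => simp [SimpleGraph.Subgraph.mem_edgeSet]

lemma matNum_le_of_no_matching (G : SimpleGraph V) {n : ℕ} (hn : 1 ≤ n)
    (hmat : ¬ ∃ M : G.Subgraph, M.IsMatching ∧ M.edgeSet.ncard = n) :
    matNum G ≤ n - 1 := by
  by_contra hc
  push_neg at hc
  have hn' : n ≤ matNum G := by omega
  obtain ⟨K, hK, hKmax⟩ := exists_max_matching G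
  have : n ≤ msize K := by omega
  obtain ⟨S, hSsub, hScard⟩ := Set.exists_subset_card_eq (s := K.edgeSet) (n := n) this
  obtain ⟨M₀, hM₀, hM₀S⟩ := exists_subgraph_matching hK S hSsub
  exact hmat ⟨M₀, hM₀, by rw [hM₀S]; exact hScard⟩

end assemble
end AHSproof

/-- `f(n) = n(n-1)` for even `n` and `f(n) = n² + (n-1)/2` for odd `n`. -/
def ahsBound (n : ℕ) : ℕ := if Even n then n * (n - 1) else n ^ 2 + (n - 1) / 2

/-- Abbott–Hanson–Sauer: a graph with at least `f(n)` edges contains a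
star with `n` edges or a matching with `n` edges. -/
theorem star_or_matching_of_many_edges {V : Type*} [Fintype V] (n : ℕ)
    (G : SimpleGraph V) (h : ahsBound n ≤ G.edgeSet.ncard) :
    (∃ v : V, n ≤ (G.neighborSet v).ncard) ∨
      (∃ M : G.Subgraph, M.IsMatching ∧ M.edgeSet.ncard = n) := by

  rcases Nat.eq_zero_or_pos n with rfl | hn
  · refine Or.inr ⟨⊥, ?_, ?_⟩
    · intro v hv
      rw [SimpleGraph.Subgraph.verts_bot] at hv
      exact absurd hv (Set.notMem_empty v)
    · rw [SimpleGraph.Subgraph.edgeSet_bot]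
      simp
  by_contra hcon
  push_neg at hcon
  obtain ⟨hstar, hmat⟩ := hcon
  obtain ⟨m, rfl⟩ : ∃ m, n = m + 1 := ⟨n - 1, by omega⟩
  have hdeg : ∀ v, AHSproof.ndeg G v ≤ m := by
    intro v
    have := hstar v
    unfold AHSproof.ndeg
    omega
  have hν : AHSproof.matNum G ≤ m := by
    have := AHSproof.matNum_le_of_no_matching G hn (by
      intro hex
      obtain ⟨M, h1, h2⟩ := hex
      exact absurd h2 (hmat M h1))
    omega
  have hmain := AHSproof.main_bound m (AHSproof.msize G) G le_rfl hdeg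
  have hmsize : AHSproof.msize G = G.edgeSet.ncard := rfl
  have hbound1 : AHSproof.msize G ≤ AHSproof.matNum G * (m+1) :=
    hmain.1
  have hmm : AHSproof.matNum G * (m+1) ≤ m * (m+1) := Nat.mul_le_mul_right _ hν
  unfold ahsBound at h
  by_cases hpar : Even (m+1)
  · -- n even, d = m odd
    rw [if_pos hpar] at h
    have hmodd : ¬ Even m := by
      rw [Nat.even_iff] at hpar ⊢
      omega
    have hm1 : 1 ≤ m := by
      rcases Nat.eq_zero_or_pos m with rfl | h'
      · exact absurd (by decide) hmodd
      · exact h'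
    have hpos : 1 ≤ AHSproof.msize G := by
      rw [hmsize]
      have h1 : 1 ≤ (m+1) * (m+1-1) := by
        simp only [Nat.add_sub_cancel]
        exact Nat.mul_pos (by omega) (by omega)
      omega
    have hb2 := hmain.2 hmodd hpos
    rw [hmsize] at hb2
    simp only [Nat.add_sub_cancel] at h
    have hcomm : m * (m+1) = (m+1) * m := Nat.mul_comm _ _
    omega
  · -- n odd
    rw [if_neg hpar] at h
    rw [hmsize] at hbound1
    have hsq : (m+1)^2 = (m+1)*(m+1) := sq (m+1)
    have hlt : m * (m+1) < (m+1)^2 := by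
      rw [hsq]
      exact (Nat.mul_lt_mul_right (by omega)).mpr (Nat.lt_succ_self m)
    simp only [Nat.add_sub_cancel] at h
    omega
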